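/- Let φ: ℂP¹ → ℂP¹ be a rational map of degree d that commutes with the antipodal map σ(z) = -1/z̄. Then d is odd. -/

import Mathlib

open Polynomial

/-- The "quaternionic structure" map on polynomials of degree ≤ k:
`tau k f = (-t)^k ⬝ conj (f (-1/t̄))`, i.e. `(tau k f).coeff i = (-1)^(k-i) conj (f.coeff (k-i))`. -/
noncomputable def tau (k : ℕ) (f : Polynomial ℂ) : Polynomial ℂ :=
  ∑ i ∈ Finset.range (k + 1), C ((-1 : ℂ) ^ (k - i) * (starRingEnd ℂ) (f.coeff (k - i))) * X ^ i

lemma tau_coeff (k : ℕ) (f : Polynomial ℂ) (i : ℕ) :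
    (tau k f).coeff i = if i ≤ k then (-1:ℂ)^(k-i) * (starRingEnd ℂ) (f.coeff (k-i)) else 0 := by
  rw [tau, Polynomial.finset_sum_coeff]
  simp only [Polynomial.coeff_C_mul, Polynomial.coeff_X_pow, mul_ite, mul_one, mul_zero]
  rw [Finset.sum_ite_eq]
  simp [Nat.lt_succ_iff]

lemma tau_natDegree_le (k : ℕ) (f : Polynomial ℂ) : (tau k f).natDegree ≤ k := by
  rw [Polynomial.natDegree_le_iff_coeff_eq_zero]
  intro m hm
  rw [tau_coeff]
  simp [Nat.not_le.mpr hm]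

lemma tau_ne_zero (k : ℕ) (f : Polynomial ℂ) (hf : f ≠ 0) (hd : f.natDegree ≤ k) :
    tau k f ≠ 0 := by
  intro h
  have h1 : (tau k f).coeff (k - f.natDegree) = 0 := by rw [h]; simp
  rw [tau_coeff] at h1
  have h2 : k - f.natDegree ≤ k := Nat.sub_le _ _
  have h3 : k - (k - f.natDegree) = f.natDegree := by omega
  rw [if_pos h2, h3] at h1
  rcases mul_eq_zero.mp h1 with h4 | h4
  · exact pow_ne_zero _ (by norm_num) h4
  · exact Polynomial.leadingCoeff_ne_zero.mpr hf (by simpa using h4)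

lemma tau_smul (k : ℕ) (γ : ℂ) (f : Polynomial ℂ) :
    tau k (γ • f) = (starRingEnd ℂ) γ • tau k f := by
  ext i
  rw [Polynomial.coeff_smul, tau_coeff, tau_coeff]
  by_cases h : i ≤ k <;> simp [h, mul_comm, mul_left_comm]

lemma tau_tau (k : ℕ) (f : Polynomial ℂ) (hd : f.natDegree ≤ k) :
    tau k (tau k f) = ((-1:ℂ)^k) • f := by
  ext i
  rw [Polynomial.coeff_smul, tau_coeff]
  by_cases h : i ≤ k
  · rw [if_pos h, tau_coeff, if_pos (Nat.sub_le _ _)]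
    have h3 : k - (k - i) = i := by omega
    rw [h3]
    simp only [map_mul, map_pow, map_neg, map_one, RingHom.id_apply,
      Complex.conj_conj, smul_eq_mul]
    rw [← mul_assoc, ← pow_add, show k - i + i = k by omega]
  · rw [if_neg h]
    have : f.coeff i = 0 := Polynomial.coeff_eq_zero_of_natDegree_lt
      (lt_of_le_of_lt hd (Nat.lt_of_not_le h))
    simp [this]

lemma key (d : ℕ) (p q : Polynomial ℂ) (hcop : IsCoprime p q) (hq : q.natDegree = d)
    (hcomm : tau d p * p + tau d q * q = 0) : Odd d := by
  have hq0 : q ≠ 0 := by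
    rintro rfl
    rw [isCoprime_zero_right] at hcop
    have hp : p ≠ 0 := hcop.ne_zero
    have hpd : p.natDegree ≤ d := by
      have := Polynomial.natDegree_eq_zero_of_isUnit hcop
      omega
    have h1 : tau d p * p = 0 := by simpa using hcomm
    exact mul_ne_zero (tau_ne_zero d p hp hpd) hp h1
  have hp0 : p ≠ 0 := by
    rintro rfl
    have htz : tau d (0 : Polynomial ℂ) = 0 := by
      ext i; rw [tau_coeff]; simp
    rw [htz] at hcomm
    simp only [zero_mul, zero_add] at hcomm
    exact mul_ne_zero (tau_ne_zero d q hq0 hq.le) hq0 hcomm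
  -- p ∣ tau d q
  have hdvd : p ∣ tau d q := by
    apply hcop.dvd_of_dvd_mul_right
    exact ⟨-(tau d p), by linear_combination hcomm⟩
  obtain ⟨c, hc⟩ := hdvd
  have hc0 : c ≠ 0 := by
    rintro rfl
    exact tau_ne_zero d q hq0 hq.le (by simpa using hc)
  have htp : tau d p = -(c * q) := by
    apply mul_right_cancel₀ hp0
    rw [hc] at hcomm
    linear_combination hcomm
  -- degree of c is 0
  have hcdeg : c.natDegree = 0 := by
    have h1 : (tau d p).natDegree ≤ d := tau_natDegree_le d p
    rw [htp, Polynomial.natDegree_neg, Polynomial.natDegree_mul hc0 hq0, hq] at h1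
    omega
  set γ := c.coeff 0 with hγ
  have hcC : c = C γ := Polynomial.eq_C_of_natDegree_eq_zero hcdeg
  have hγ0 : γ ≠ 0 := by
    intro h; apply hc0; rw [hcC, h, map_zero]
  -- compute tau d (tau d q) two ways
  have e1 : ((-1:ℂ)^d) • q = (starRingEnd ℂ) γ • (-(C γ * q)) := by
    rw [← tau_tau d q hq.le, hc, hcC, show p * C γ = γ • p by
      rw [Polynomial.smul_eq_C_mul, mul_comm], tau_smul, htp, hcC]
  have e1' : ((-1:ℂ)^d) • q = (-( (starRingEnd ℂ) γ * γ)) • q := by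
    rw [e1, show -(C γ * q) = (-γ) • q by
      rw [Polynomial.smul_eq_C_mul, map_neg, neg_mul], smul_smul]
    ring_nf
  have e2 : (((-1:ℂ)^d) - (-( (starRingEnd ℂ) γ * γ))) • q = 0 := by
    rw [sub_smul, e1', sub_self]
  have e3 : ((-1:ℂ)^d + (starRingEnd ℂ) γ * γ) = 0 := by
    rcases smul_eq_zero.mp e2 with h | h
    · linear_combination h
    · exact absurd h hq0
  rcases Nat.even_or_odd d with he | ho
  · exfalso
    rw [he.neg_one_pow] at e3
    have hns : (starRingEnd ℂ) γ * γ = (Complex.normSq γ : ℂ) :=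
      (Complex.normSq_eq_conj_mul_self (z := γ)).symm
    rw [hns] at e3
    have : (1 : ℝ) + Complex.normSq γ = 0 := by exact_mod_cast e3
    have := Complex.normSq_nonneg γ
    linarith
  · exact ho

/-- A rational map `φ = p/q : ℂP¹ → ℂP¹` of degree `d` (given by coprime polynomials with
`max (deg p) (deg q) = d`) which commutes with the antipodal map `z ↦ -1/z̄`
(equivalently, `tau d p ⬝ p + tau d q ⬝ q = 0` as polynomials) has odd degree. -/
theorem degree_odd_of_commutes_with_antipodal (d : ℕ) (p q : Polynomial ℂ)
    (hcop : IsCoprime p q) (hdeg : max p.natDegree q.natDegree = d)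
    (hcomm : tau d p * p + tau d q * q = 0) :
    Odd d := by
  rcases le_total p.natDegree q.natDegree with h | h
  · exact key d p q hcop (by rw [← hdeg, max_eq_right h]) hcomm
  · exact key d q p hcop.symm (by rw [← hdeg, max_eq_left h]) (by rwa [add_comm])
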